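/- Fix an anchor point (b_a, y_a) with 0 < b_a < y_a, a floor θ̄ ∈ [0,1] with θ := 1 − θ̄, and x_U ∈ [0, y_a). Consider the discrete-decay price curve p(x) := 1 for x ≤ x_U and p(x) := r_U for x > x_U, where r_U := (b_a − x_U)/(y_a − x_U), and let b(x) := b_a − ∫₀ˣ p(t) dt. Then: (1) b(x) = b_a − x for x ≤ x_U and b(x) = b_a − x_U − r_U·(x − x_U) for x ≥ x_U; (2) if x_U < b_a then r_U equals the reserve ratio at x_U, i.e., r_U = b(x_U)/(y_a − x_U), and b(x) > 0 for all x ∈ [0, y_a), whereas if x_U ≥ b_a there exists x ∈ [0, y_a) with b(x) = 0; (3) when x_U < b_a, r_U ≥ θ̄ if and only if b_a/y_a ≥ θ̄ and x_U ≤ (b_a − θ̄·y_a)/θ. -/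

import Mathlib

/-- Lemma `lem:discrete-b`: for the discrete-decay redemption curve
    (price 1 up to `x_U`, then constant `r_U := (b_a − x_U)/(y_a − x_U)`):
    (1) explicit formula for `b(x) = b_a − ∫₀ˣ p`;
    (2) if `x_U < b_a` then `r_U` is the reserve ratio at `x_U` and the reserve is
        never exhausted on `[0, y_a)`, whereas if `x_U ≥ b_a` the reserve is exhausted
        at some `x ∈ [0, y_a)`;
    (3) if `x_U < b_a` then `r_U ≥ θ̄` iff `b_a/y_a ≥ θ̄` and
        `x_U ≤ (b_a − θ̄·y_a)/θ`, where `θ := 1 − θ̄`. -/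
theorem discrete_decay_reserve
    (ba ya θbar xU : ℝ)
    (hba : 0 < ba) (hbya : ba < ya)
    (hθ0 : 0 ≤ θbar) (hθ1 : θbar ≤ 1)
    (hxU0 : 0 ≤ xU) (hxUya : xU < ya) :
    let θ : ℝ := 1 - θbar
    let rU : ℝ := (ba - xU) / (ya - xU)
    let p : ℝ → ℝ := fun t => if t ≤ xU then 1 else rU
    let b : ℝ → ℝ := fun x => ba - ∫ t in (0:ℝ)..x, p t
    (∀ x : ℝ, (x ≤ xU → b x = ba - x) ∧ (xU ≤ x → b x = ba - xU - rU * (x - xU))) ∧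
    (xU < ba → rU = b xU / (ya - xU) ∧ ∀ x ∈ Set.Ico (0:ℝ) ya, 0 < b x) ∧
    (ba ≤ xU → ∃ x ∈ Set.Ico (0:ℝ) ya, b x = 0) ∧
    (xU < ba → (θbar ≤ rU ↔ θbar ≤ ba / ya ∧ xU ≤ (ba - θbar * ya) / θ)) := by
  intro θ rU p b
  have hya0 : 0 < ya := hba.trans hbya
  have hyx : 0 < ya - xU := by linarith
  have hrU1 : rU < 1 := by
    rw [div_lt_one hyx]; linarith
  -- p is antitone, hence interval integrable
  have hanti : Antitone p := by
    intro s t hst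
    by_cases ht : t ≤ xU
    · simp [p, ht, le_trans hst ht]
    · by_cases hs : s ≤ xU
      · simp [p, hs, ht, hrU1.le]
      · simp [p, hs, ht]
  have hint : ∀ a c : ℝ, IntervalIntegrable p MeasureTheory.volume a c :=
    fun a c => hanti.intervalIntegrable
  -- integrals over the first piece
  have hlow : ∀ x : ℝ, x ≤ xU → (∫ t in (0:ℝ)..x, p t) = x := by
    intro x hx
    have : (∫ t in (0:ℝ)..x, p t) = ∫ t in (0:ℝ)..x, (1:ℝ) := by
      apply intervalIntegral.integral_congr
      intro t ht
      have ht' : t ≤ xU := by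
        rcases Set.mem_uIcc.mp ht with h | h
        · exact le_trans h.2 hx
        · exact le_trans h.2 hxU0
      simp [p, ht']
    rw [this]; simp
  -- integrals over the second piece
  have hhigh : ∀ x : ℝ, xU ≤ x → (∫ t in (0:ℝ)..x, p t) = xU + rU * (x - xU) := by
    intro x hx
    have hsplit : (∫ t in (0:ℝ)..x, p t)
        = (∫ t in (0:ℝ)..xU, p t) + ∫ t in xU..x, p t :=
      (intervalIntegral.integral_add_adjacent_intervals (hint 0 xU) (hint xU x)).symm
    have h2 : (∫ t in xU..x, p t) = rU * (x - xU) := by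
      have : (∫ t in xU..x, p t) = ∫ t in xU..x, rU := by
        apply intervalIntegral.integral_congr_ae
        filter_upwards with t ht
        have htU : xU < t := by
          rw [Set.uIoc_of_le hx] at ht
          exact ht.1
        simp [p, not_le.mpr htU]
      rw [this, intervalIntegral.integral_const, smul_eq_mul, mul_comm]
    rw [hsplit, hlow xU le_rfl, h2]
  have hb1 : ∀ x : ℝ, x ≤ xU → b x = ba - x := by
    intro x hx; simp only [b, hlow x hx]
  have hb2 : ∀ x : ℝ, xU ≤ x → b x = ba - xU - rU * (x - xU) := by
    intro x hx; simp only [b, hhigh x hx]; ring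
  refine ⟨fun x => ⟨hb1 x, hb2 x⟩, ?_, ?_, ?_⟩
  · intro hxb
    constructor
    · rw [hb1 xU le_rfl]
    · intro x hx
      rcases le_or_gt x xU with h | h
      · rw [hb1 x h]; linarith
      · rw [hb2 x h.le]
        have key : ba - xU - rU * (x - xU) = (ba - xU) * (ya - x) / (ya - xU) := by
          simp only [rU]; field_simp; ring
        rw [key]
        have h1 : 0 < ya - x := by linarith [hx.2]
        exact div_pos (mul_pos (by linarith) h1) hyx
  · intro hxb
    refine ⟨ba, ⟨hba.le, hbya⟩, ?_⟩
    rw [hb1 ba hxb]; ring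
  · intro hxb
    have hbx : 0 < ba - xU := by linarith
    constructor
    · intro h
      rw [le_div_iff₀ hyx] at h
      have hby : θbar * ya ≤ ba := by nlinarith
      constructor
      · rw [le_div_iff₀ hya0]; exact hby
      · rcases eq_or_lt_of_le hθ1 with h1 | h1
        · exfalso; nlinarith
        · have hθpos : 0 < θ := by simp only [θ]; linarith
          rw [le_div_iff₀ hθpos]
          simp only [θ]; nlinarith
    · rintro ⟨h1, h2⟩
      rw [le_div_iff₀ hya0] at h1
      rcases eq_or_lt_of_le hθ1 with hθe | hθe
      · exfalso; nlinarith
      · have hθpos : 0 < θ := by simp only [θ]; linarith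
        rw [le_div_iff₀ hθpos] at h2
        rw [le_div_iff₀ hyx]
        simp only [θ] at h2; nlinarith
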